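/- Consider N samples processed online in score-ascending order under weighted square error, maintaining a stack of groups (weighted means and weights) where upon arrival of a new sample one repeatedly merges the top group with its predecessor while the predecessor's weighted mean is ≥ the top group's weighted mean. Then after processing all N samples, the resulting block-constant nondecreasing sequence equals the (unique) isotonic regression of the targets, i.e., the minimizer of Σ α_n (z_n - y_n)² over nondecreasing z. -/

import Mathlib

open Finset

/-- A group maintained by the online algorithm: its weighted mean, total
weight, and number of samples. -/
structure PavGroup where
  mean : ℝ
  wt : ℝ
  size : ℕ

/-- Push a new group on the stack (head = most recent group), repeatedly
merging it with the preceding group while that group's weighted mean is `≥`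
the new group's weighted mean, using the weighted-mean merge rule. -/
noncomputable def pavPush : List PavGroup → PavGroup → List PavGroup
  | [], g => [g]
  | p :: rest, g =>
      if g.mean ≤ p.mean then
        pavPush rest
          ⟨(p.wt * p.mean + g.wt * g.mean) / (p.wt + g.wt), p.wt + g.wt,
            p.size + g.size⟩
      else g :: p :: rest

/-- Process the samples (targets with weights) in score-ascending order. -/
noncomputable def pavRun (data : List (ℝ × ℝ)) : List PavGroup :=
  data.foldl (fun s p => pavPush s ⟨p.1, p.2, 1⟩) []

/-- Expand the final stack into the fitted block-constant sequence. -/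
noncomputable def pavExpand (s : List PavGroup) : List ℝ :=
  s.reverse.flatMap fun g => List.replicate g.size g.mean

section PavAux
variable (y α : ℕ → ℝ)


/-- Validity of a single group covering samples `[a, a + g.size)`. -/
def pavGroupOK (a : ℕ) (g : PavGroup) : Prop :=
  0 < g.size ∧
  g.wt = ∑ n ∈ Ico a (a + g.size), α n ∧
  g.wt * g.mean = ∑ n ∈ Ico a (a + g.size), α n * y n ∧
  ∀ b, a ≤ b → b ≤ a + g.size → 0 ≤ ∑ n ∈ Ico a b, α n * (y n - g.mean)

/-- Validity of a stack covering the first `m` samples. -/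
inductive pavStackOK : List PavGroup → ℕ → Prop
  | nil : pavStackOK [] 0
  | cons {rest : List PavGroup} {a : ℕ} {g : PavGroup} :
      pavStackOK rest a → pavGroupOK y α a g →
      (∀ p ∈ rest.head?, p.mean ≤ g.mean) →
      pavStackOK (g :: rest) (a + g.size)

lemma pav_wt_pos (hα : ∀ n, 0 < α n) {a : ℕ} {g : PavGroup} (hg : pavGroupOK y α a g) : 0 < g.wt := by
  have h1 := hg.1
  rw [hg.2.1]
  exact Finset.sum_pos (fun n _ => hα n) (by rw [Finset.nonempty_Ico]; omega)

lemma pav_total_zero {a : ℕ} {g : PavGroup} (hg : pavGroupOK y α a g) :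
    ∑ n ∈ Ico a (a + g.size), α n * (y n - g.mean) = 0 := by
  have h1 : ∑ n ∈ Ico a (a + g.size), α n * (y n - g.mean)
      = (∑ n ∈ Ico a (a + g.size), α n * y n) - (∑ n ∈ Ico a (a + g.size), α n) * g.mean := by
    rw [Finset.sum_mul, ← Finset.sum_sub_distrib]; exact Finset.sum_congr rfl (fun n _ => by ring)
  rw [h1, ← hg.2.1, ← hg.2.2.1]; ring

/-- key Abel-type lemma: for a block with prefix conditions, `∑ α (μ - y) z ≥ 0`. -/
lemma pav_key {a m : ℕ} (ham : a ≤ m) {μ : ℝ} {z : ℕ → ℝ} (hz : Monotone z)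
    (hpre : ∀ b, a ≤ b → b ≤ m → 0 ≤ ∑ n ∈ Ico a b, α n * (y n - μ))
    (htot : ∑ n ∈ Ico a m, α n * (y n - μ) = 0) :
    0 ≤ ∑ n ∈ Ico a m, α n * (μ - y n) * z n := by
  have aux : ∀ b, a ≤ b → b ≤ m →
      (∑ n ∈ Ico a b, α n * (μ - y n)) * z b ≤ ∑ n ∈ Ico a b, α n * (μ - y n) * z n := by
    intro b hb
    induction b, hb using Nat.le_induction with
    | base => simp
    | succ b hb ih =>
      intro hbm
      have hbm' : b ≤ m := by omega
      have ih' := ih hbm'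
      have hQ : ∑ n ∈ Ico a (b+1), α n * (μ - y n) ≤ 0 := by
        have := hpre (b+1) (by omega) hbm
        have he : ∑ n ∈ Ico a (b+1), α n * (μ - y n)
            = -∑ n ∈ Ico a (b+1), α n * (y n - μ) := by
          rw [← Finset.sum_neg_distrib]; apply Finset.sum_congr rfl; intro x _; ring
        rw [he]; linarith
      have hsplit : ∀ f : ℕ → ℝ, ∑ n ∈ Ico a (b+1), f n = (∑ n ∈ Ico a b, f n) + f b := by
        intro f; rw [Finset.sum_Ico_succ_top (by omega)]
      calc (∑ n ∈ Ico a (b+1), α n * (μ - y n)) * z (b+1)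
          ≤ (∑ n ∈ Ico a (b+1), α n * (μ - y n)) * z b := by
            rcases le_iff_lt_or_eq.mp (hz (Nat.le_succ b)) with h | h
            · nlinarith
            · rw [h]
        _ = (∑ n ∈ Ico a b, α n * (μ - y n)) * z b + α b * (μ - y b) * z b := by
            rw [hsplit]; ring
        _ ≤ ∑ n ∈ Ico a b, α n * (μ - y n) * z n + α b * (μ - y b) * z b := by linarith
        _ = ∑ n ∈ Ico a (b+1), α n * (μ - y n) * z n := by rw [hsplit (fun n => α n * (μ - y n) * z n)]
  have h := aux m ham le_rfl
  have htot' : ∑ n ∈ Ico a m, α n * (μ - y n) = 0 := by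
    have he : ∑ n ∈ Ico a m, α n * (μ - y n) = -∑ n ∈ Ico a m, α n * (y n - μ) := by
      rw [← Finset.sum_neg_distrib]; apply Finset.sum_congr rfl; intro x _; ring
    rw [he, htot]; ring
  rw [htot'] at h; linarith


lemma pav_shift (μ₁ μ₂ : ℝ) (a b : ℕ) :
    ∑ n ∈ Ico a b, α n * (y n - μ₁)
      = ∑ n ∈ Ico a b, α n * (y n - μ₂) + (μ₂ - μ₁) * ∑ n ∈ Ico a b, α n := by
  rw [Finset.mul_sum, ← Finset.sum_add_distrib]
  exact Finset.sum_congr rfl (fun n _ => by ring)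

lemma pav_total_zero' {a m : ℕ} {μ w : ℝ} (hw : w = ∑ n ∈ Ico a m, α n)
    (hm : w * μ = ∑ n ∈ Ico a m, α n * y n) :
    ∑ n ∈ Ico a m, α n * (y n - μ) = 0 := by
  have h1 : ∑ n ∈ Ico a m, α n * (y n - μ)
      = (∑ n ∈ Ico a m, α n * y n) - (∑ n ∈ Ico a m, α n) * μ := by
    rw [Finset.sum_mul, ← Finset.sum_sub_distrib]; exact Finset.sum_congr rfl (fun n _ => by ring)
  rw [h1, ← hw, ← hm]; ring

lemma pav_merge (hα : ∀ n, 0 < α n) {a : ℕ} {p g : PavGroup}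
    (hp : pavGroupOK y α a p) (hg : pavGroupOK y α (a + p.size) g)
    (hle : g.mean ≤ p.mean) :
    pavGroupOK y α a
      ⟨(p.wt * p.mean + g.wt * g.mean) / (p.wt + g.wt), p.wt + g.wt, p.size + g.size⟩ := by
  set c := a + p.size with hc
  set m := a + (p.size + g.size) with hm
  have hcm : c + g.size = m := by omega
  have hwp : 0 < p.wt := pav_wt_pos y α hα hp
  have hwg : 0 < g.wt := pav_wt_pos y α hα hg
  set μ : ℝ := (p.wt * p.mean + g.wt * g.mean) / (p.wt + g.wt) with hμ
  have hwpg : p.wt + g.wt ≠ 0 := by positivity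
  have hμg : g.mean ≤ μ := by rw [hμ, le_div_iff₀ (by positivity)]; nlinarith
  have hμp : μ ≤ p.mean := by rw [hμ, div_le_iff₀ (by positivity)]; nlinarith
  have hwt : p.wt + g.wt = ∑ n ∈ Ico a m, α n := by
    rw [← Finset.sum_Ico_consecutive _ (by omega : a ≤ c) (by omega : c ≤ m),
      hp.2.1, hg.2.1, hcm]
  have hmean : (p.wt + g.wt) * μ = ∑ n ∈ Ico a m, α n * y n := by
    rw [← Finset.sum_Ico_consecutive _ (by omega : a ≤ c) (by omega : c ≤ m),
      ← hp.2.2.1]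
    have : (∑ n ∈ Ico c m, α n * y n) = g.wt * g.mean := by rw [hg.2.2.1, hcm]
    rw [this, hμ]
    field_simp
  have htotal : ∑ n ∈ Ico a m, α n * (y n - μ) = 0 := pav_total_zero' y α hwt hmean
  have hgtotal : ∑ n ∈ Ico c m, α n * (y n - g.mean) = 0 := by
    have := pav_total_zero' y α hg.2.1 hg.2.2.1
    rwa [hcm] at this
  refine ⟨by simp [hp.1], by simpa using hwt, by simpa using hmean, ?_⟩
  intro b hab hbm
  simp only at hbm ⊢
  rcases le_or_gt b c with hbc | hbc
  · -- prefix within p's block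
    rw [pav_shift y α μ p.mean]
    have h1 := hp.2.2.2 b hab (by omega)
    have h2 : 0 ≤ ∑ n ∈ Ico a b, α n := Finset.sum_nonneg (fun n _ => (hα n).le)
    nlinarith
  · -- prefix covering all of p's block and part of g's
    have hsplit : ∑ n ∈ Ico a b, α n * (y n - μ)
        = -∑ n ∈ Ico b m, α n * (y n - μ) := by
      have h := Finset.sum_Ico_consecutive (fun n => α n * (y n - μ))
        (by omega : a ≤ b) (by omega : b ≤ m)
      linarith [htotal]
    rw [hsplit]
    have h1 : ∑ n ∈ Ico b m, α n * (y n - g.mean)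
        = -∑ n ∈ Ico c b, α n * (y n - g.mean) := by
      have := Finset.sum_Ico_consecutive (fun n => α n * (y n - g.mean))
        (by omega : c ≤ b) (by omega : b ≤ m)
      linarith [this, hgtotal]
    have h2 : 0 ≤ ∑ n ∈ Ico c b, α n * (y n - g.mean) :=
      hg.2.2.2 b (by omega) (by omega)
    have h3 : 0 ≤ ∑ n ∈ Ico b m, α n := Finset.sum_nonneg (fun n _ => (hα n).le)
    rw [pav_shift y α μ g.mean]
    nlinarith




lemma pav_push_ok (hα : ∀ n, 0 < α n) (s : List PavGroup) :
    ∀ a g, pavStackOK y α s a → pavGroupOK y α a g →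
      pavStackOK y α (pavPush s g) (a + g.size) := by
  induction s with
  | nil =>
    intro a g hs hg
    cases hs
    simpa [pavPush] using pavStackOK.cons pavStackOK.nil hg (by simp)
  | cons p rest ih =>
    intro a g hs hg
    cases hs
    next a' hp hrest hhead =>
      rw [pavPush]
      by_cases hle : g.mean ≤ p.mean
      · rw [if_pos hle]
        have hmerge := pav_merge y α hα hp hg hle
        have h := ih a' _ hrest hmerge
        simpa [Nat.add_assoc] using h
      · rw [if_neg hle]
        exact pavStackOK.cons (pavStackOK.cons hrest hp hhead) hg
          (by simp [(not_le.mp hle).le])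

lemma pav_single_ok (k : ℕ) : pavGroupOK y α k ⟨y k, α k, 1⟩ := by
  have hIco : Ico k (k + 1) = {k} := by ext n; simp [Nat.lt_succ_iff, Nat.le_antisymm_iff]
  refine ⟨one_pos, by simp [hIco], by simp [hIco], ?_⟩
  intro b hb hb'
  have hb2 : b ≤ k + 1 := hb'
  have : b = k ∨ b = k + 1 := by omega
  rcases this with rfl | rfl
  · simp
  · simp [hIco]

lemma pav_run_ok (hα : ∀ n, 0 < α n) (N : ℕ) :
    pavStackOK y α (pavRun ((List.range N).map fun n => (y n, α n))) N := by
  induction N with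
  | zero => simpa [pavRun] using pavStackOK.nil (y := y) (α := α)
  | succ k ih =>
    rw [List.range_succ, List.map_append]
    unfold pavRun at ih ⊢
    rw [List.foldl_append]
    simpa using pav_push_ok y α hα _ k ⟨y k, α k, 1⟩ ih (pav_single_ok y α k)

lemma pavExpand_cons (g : PavGroup) (rest : List PavGroup) :
    pavExpand (g :: rest) = pavExpand rest ++ List.replicate g.size g.mean := by
  simp [pavExpand]

lemma pav_length {s : List PavGroup} {m : ℕ} (hs : pavStackOK y α s m) :
    (pavExpand s).length = m := by
  induction hs with
  | nil => simp [pavExpand]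
  | cons hrest hg hhead ih =>
    rw [pavExpand_cons]
    simp [ih]

lemma pav_getD_low {g : PavGroup} {rest : List PavGroup} {n : ℕ}
    (hn : n < (pavExpand rest).length) :
    (pavExpand (g :: rest)).getD n 0 = (pavExpand rest).getD n 0 := by
  rw [pavExpand_cons, List.getD_append _ _ _ _ hn]

lemma pav_getD_top {g : PavGroup} {rest : List PavGroup} {n : ℕ}
    (h1 : (pavExpand rest).length ≤ n) (h2 : n < (pavExpand rest).length + g.size) :
    (pavExpand (g :: rest)).getD n 0 = g.mean := by
  rw [pavExpand_cons, List.getD_append_right _ _ _ _ h1]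
  have : n - (pavExpand rest).length < g.size := by omega
  simp [List.getD, List.getElem?_replicate, this]

lemma pav_stack_le (s : List PavGroup) : ∀ m, pavStackOK y α s m →
    ∀ c : ℝ, (∀ p ∈ s.head?, p.mean ≤ c) → ∀ q ∈ s, q.mean ≤ c := by
  induction s with
  | nil => simp
  | cons g rest ih =>
    intro m hs c hc q hq
    cases hs
    next a' hg hrest hhead =>
      rcases List.mem_cons.mp hq with rfl | hq'
      · exact hc _ rfl
      · exact ih a' hrest c (fun p hp => (hhead p hp).trans (hc _ rfl)) q hq'

lemma pav_val_mem (s : List PavGroup) : ∀ m, pavStackOK y α s m →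
    ∀ n, n < m → ∃ q ∈ s, (pavExpand s).getD n 0 = q.mean := by
  induction s with
  | nil => intro m hs n hn; cases hs; omega
  | cons g rest ih =>
    intro m hs n hn
    cases hs
    next a' hg hrest hhead =>
      have hlen : (pavExpand rest).length = a' := pav_length y α hrest
      rcases lt_or_ge n a' with h | h
      · obtain ⟨q, hq, he⟩ := ih a' hrest n h
        exact ⟨q, List.mem_cons_of_mem _ hq, by rw [pav_getD_low (by omega)]; exact he⟩
      · exact ⟨g, List.mem_cons_self, pav_getD_top (by omega) (by omega)⟩

lemma pav_mono (s : List PavGroup) : ∀ m, pavStackOK y α s m →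
    ∀ i j, i ≤ j → j < m →
      (pavExpand s).getD i 0 ≤ (pavExpand s).getD j 0 := by
  induction s with
  | nil => intro m hs i j _ hj; cases hs; omega
  | cons g rest ih =>
    intro m hs i j hij hj
    cases hs
    next a' hg hrest hhead =>
      have hlen : (pavExpand rest).length = a' := pav_length y α hrest
      rcases lt_or_ge j a' with h | h
      · rw [pav_getD_low (g := g) (show j < (pavExpand rest).length by omega),
          pav_getD_low (g := g) (show i < (pavExpand rest).length by omega)]
        exact ih a' hrest i j hij h
      · have hvj : (pavExpand (g :: rest)).getD j 0 = g.mean :=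
          pav_getD_top (by omega) (by omega)
        rcases lt_or_ge i a' with h' | h'
        · have hvi := pav_getD_low (g := g) (show i < (pavExpand rest).length by omega)
          rw [hvj, hvi]
          obtain ⟨q, hq, he⟩ := pav_val_mem y α rest a' hrest i h'
          rw [he]
          exact pav_stack_le y α rest a' hrest g.mean hhead q hq
        · have hvi : (pavExpand (g :: rest)).getD i 0 = g.mean :=
            pav_getD_top (by omega) (by omega)
          rw [hvi, hvj]

lemma pav_block_opt (hα : ∀ n, 0 < α n) {a : ℕ} {g : PavGroup} (hg : pavGroupOK y α a g)
    {z : ℕ → ℝ} (hz : Monotone z) :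
    ∑ n ∈ Ico a (a + g.size), α n * (g.mean - y n) ^ 2
      ≤ ∑ n ∈ Ico a (a + g.size), α n * (z n - y n) ^ 2 := by
  set m := a + g.size with hm
  set μ := g.mean with hμ
  have htot : ∑ n ∈ Ico a m, α n * (y n - μ) = 0 :=
    pav_total_zero' y α hg.2.1 hg.2.2.1
  have htot' : ∑ n ∈ Ico a m, α n * (μ - y n) = 0 := by
    have he : ∑ n ∈ Ico a m, α n * (μ - y n) = -∑ n ∈ Ico a m, α n * (y n - μ) := by
      rw [← Finset.sum_neg_distrib]; exact Finset.sum_congr rfl (fun n _ => by ring)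
    rw [he, htot]; ring
  have hkey : 0 ≤ ∑ n ∈ Ico a m, α n * (μ - y n) * z n :=
    pav_key y α (by omega) hz hg.2.2.2 htot
  have hsq : 0 ≤ ∑ n ∈ Ico a m, α n * (z n - μ) ^ 2 :=
    Finset.sum_nonneg (fun n _ => mul_nonneg (hα n).le (sq_nonneg _))
  have e1 : ∑ n ∈ Ico a m, α n * (z n - y n) ^ 2
      = ∑ n ∈ Ico a m, (α n * (μ - y n) ^ 2 + α n * (z n - μ) ^ 2
          + 2 * (α n * (μ - y n) * z n) - 2 * μ * (α n * (μ - y n))) :=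
    Finset.sum_congr rfl (fun n _ => by ring)
  rw [Finset.sum_sub_distrib, Finset.sum_add_distrib, Finset.sum_add_distrib,
    ← Finset.mul_sum, ← Finset.mul_sum] at e1
  rw [e1, htot']
  linarith

lemma pav_opt (hα : ∀ n, 0 < α n) (s : List PavGroup) : ∀ m, pavStackOK y α s m →
    ∀ z : ℕ → ℝ, Monotone z →
      ∑ n ∈ Ico 0 m, α n * ((pavExpand s).getD n 0 - y n) ^ 2
        ≤ ∑ n ∈ Ico 0 m, α n * (z n - y n) ^ 2 := by
  induction s with
  | nil => intro m hs z hz; cases hs; simp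
  | cons g rest ih =>
    intro m hs z hz
    cases hs
    next a' hg hrest hhead =>
      have hlen : (pavExpand rest).length = a' := pav_length y α hrest
      rw [← Finset.sum_Ico_consecutive (fun n => α n * ((pavExpand (g :: rest)).getD n 0 - y n) ^ 2)
          (Nat.zero_le a') (by omega : a' ≤ a' + g.size),
        ← Finset.sum_Ico_consecutive (fun n => α n * (z n - y n) ^ 2)
          (Nat.zero_le a') (by omega : a' ≤ a' + g.size)]
      beta_reduce
      apply add_le_add
      · have hcong : ∑ n ∈ Ico 0 a', α n * ((pavExpand (g :: rest)).getD n 0 - y n) ^ 2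
            = ∑ n ∈ Ico 0 a', α n * ((pavExpand rest).getD n 0 - y n) ^ 2 := by
          refine Finset.sum_congr rfl (fun n hn => ?_)
          have hn' : n < a' := (Finset.mem_Ico.mp hn).2
          rw [pav_getD_low (g := g) (by omega)]
        rw [hcong]; exact ih a' hrest z hz
      · have hcong : ∑ n ∈ Ico a' (a' + g.size), α n * ((pavExpand (g :: rest)).getD n 0 - y n) ^ 2
            = ∑ n ∈ Ico a' (a' + g.size), α n * (g.mean - y n) ^ 2 := by
          refine Finset.sum_congr rfl (fun n hn => ?_)
          have hn' := Finset.mem_Ico.mp hn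
          rw [pav_getD_top (by omega) (by omega)]
        rw [hcong]; exact pav_block_opt y α hα hg hz

end PavAux

/-- the online PAV-style algorithm outputs the unique isotonic
regression of the targets under weighted square error. -/
theorem stmt_17 (N : ℕ) (y α : ℕ → ℝ) (hα : ∀ n, 0 < α n)
    (out : List ℝ)
    (hout : out = pavExpand (pavRun ((List.range N).map fun n => (y n, α n)))) :
    out.length = N ∧
    MonotoneOn (fun n => out.getD n 0) (Set.Iio N) ∧
    (∀ z : ℕ → ℝ, Monotone z →
      (∑ n ∈ Finset.range N, α n * (out.getD n 0 - y n) ^ 2) ≤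
        ∑ n ∈ Finset.range N, α n * (z n - y n) ^ 2) ∧
    (∀ z : ℕ → ℝ, Monotone z →
      (∀ w : ℕ → ℝ, Monotone w →
        (∑ n ∈ Finset.range N, α n * (z n - y n) ^ 2) ≤
          ∑ n ∈ Finset.range N, α n * (w n - y n) ^ 2) →
      ∀ n < N, z n = out.getD n 0) := by
  set s := pavRun ((List.range N).map fun n => (y n, α n)) with hsdef
  have hs : pavStackOK y α s N := pav_run_ok y α hα N
  subst hout
  have hlen : (pavExpand s).length = N := pav_length y α hs
  have hmono : ∀ i j, i ≤ j → j < N →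
      (pavExpand s).getD i 0 ≤ (pavExpand s).getD j 0 := pav_mono y α s N hs
  have hopt : ∀ z : ℕ → ℝ, Monotone z →
      (∑ n ∈ Finset.range N, α n * ((pavExpand s).getD n 0 - y n) ^ 2) ≤
        ∑ n ∈ Finset.range N, α n * (z n - y n) ^ 2 := by
    intro z hz
    have := pav_opt y α hα s N hs z hz
    simpa [← Finset.range_eq_Ico] using this
  refine ⟨hlen, ?_, hopt, ?_⟩
  · intro i hi j hj hij
    exact hmono i j hij hj
  · intro z hz hmin n hn
    have hN : 0 < N := by omega
    set V : ℕ → ℝ := fun k => (pavExpand s).getD (min k (N - 1)) 0 with hV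
    have hVmono : Monotone V := by
      intro i j hij
      exact hmono _ _ (min_le_min hij le_rfl) (by omega)
    have hVeq : ∀ k, k < N → V k = (pavExpand s).getD k 0 := by
      intro k hk
      simp only [hV]
      rw [min_eq_left (by omega)]
    have hfV : (∑ n ∈ Finset.range N, α n * (V n - y n) ^ 2)
        = ∑ n ∈ Finset.range N, α n * ((pavExpand s).getD n 0 - y n) ^ 2 :=
      Finset.sum_congr rfl (fun k hk => by rw [hVeq k (Finset.mem_range.mp hk)])
    have h3 : (∑ n ∈ Finset.range N, α n * (z n - y n) ^ 2)
        ≤ ∑ n ∈ Finset.range N, α n * (V n - y n) ^ 2 := hmin V hVmono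
    have h2 : (∑ n ∈ Finset.range N, α n * (V n - y n) ^ 2)
        ≤ ∑ n ∈ Finset.range N, α n * (z n - y n) ^ 2 := by
      rw [hfV]; exact hopt z hz
    set w : ℕ → ℝ := fun k => (z k + V k) / 2 with hw
    have hwmono : Monotone w := by
      intro i j hij
      have h1 := hz hij
      have h2 := hVmono hij
      simp only [hw]
      linarith
    have h4 : (∑ n ∈ Finset.range N, α n * (V n - y n) ^ 2)
        ≤ ∑ n ∈ Finset.range N, α n * (w n - y n) ^ 2 := by
      rw [hfV]; exact hopt w hwmono
    have e1 : ∑ n ∈ Finset.range N, (α n * (w n - y n) ^ 2 + α n * ((z n - V n) / 2) ^ 2)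
        = ∑ n ∈ Finset.range N, ((α n * (z n - y n) ^ 2 + α n * (V n - y n) ^ 2) / 2) :=
      Finset.sum_congr rfl (fun k _ => by simp only [hw]; ring)
    rw [Finset.sum_add_distrib, ← Finset.sum_div, Finset.sum_add_distrib] at e1
    have hD : (∑ n ∈ Finset.range N, α n * ((z n - V n) / 2) ^ 2) ≤ 0 := by linarith
    have hD0 : ∀ k ∈ Finset.range N, α k * ((z k - V k) / 2) ^ 2 = 0 := by
      rw [← Finset.sum_eq_zero_iff_of_nonneg
        (fun k _ => mul_nonneg (hα k).le (sq_nonneg _))]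
      have : 0 ≤ ∑ n ∈ Finset.range N, α n * ((z n - V n) / 2) ^ 2 :=
        Finset.sum_nonneg (fun k _ => mul_nonneg (hα k).le (sq_nonneg _))
      linarith
    have := hD0 n (Finset.mem_range.mpr hn)
    have hzn : z n = V n := by
      have hαn := hα n
      have h5 : ((z n - V n) / 2) ^ 2 = 0 := by
        by_contra h
        have : 0 < ((z n - V n) / 2) ^ 2 := lt_of_le_of_ne (sq_nonneg _) (Ne.symm h)
        nlinarith
      have := pow_eq_zero_iff (n := 2) (by norm_num) |>.mp h5
      linarith
    rw [hzn, hVeq n hn]
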